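/- Let k be a fixed positive integer, let a, σ be real numbers with 0 < |a| < 1 and σ > 0, let b = a^k, and let (α_n)_{n ≥ 0} be a sequence of real numbers with |α_n| ≤ σ for all n. If σ < (1 − |a|)/(1 − |a|^k), then every solution (x_n)_{n ≥ −k} of the difference equation x_{n+1} = a x_n + α_n · tanh(x_n − b x_{n−k}) over the real numbers converges to zero. -/

import Mathlib

lemma my_abs_tanh_le_one (t : ℝ) : |Real.tanh t| ≤ 1 := by
  have hc := Real.cosh_pos t
  have h1 : Real.sinh t < Real.cosh t := Real.sinh_lt_cosh t
  have h2 : -Real.cosh t < Real.sinh t := by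
    have h := Real.sinh_lt_cosh (-t)
    rw [Real.sinh_neg, Real.cosh_neg] at h; linarith
  rw [Real.tanh_eq_sinh_div_cosh, abs_div, abs_of_pos hc, div_le_one hc]
  exact abs_le.2 ⟨by linarith, h1.le⟩

lemma my_sinh_nonneg {t : ℝ} (ht : 0 ≤ t) : 0 ≤ Real.sinh t := by
  rw [← Real.sinh_zero]; exact Real.sinh_le_sinh.2 ht

lemma my_tanh_le_self {t : ℝ} (ht : 0 ≤ t) : Real.tanh t ≤ t := by
  have hc := Real.cosh_pos t
  rw [Real.tanh_eq_sinh_div_cosh, div_le_iff₀ hc]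
  have hd : ∀ s : ℝ, HasDerivAt (fun s => s * Real.cosh s - Real.sinh s) (s * Real.sinh s) s := by
    intro s
    have h := ((hasDerivAt_id s).mul (Real.hasDerivAt_cosh s)).sub (Real.hasDerivAt_sinh s)
    exact h.congr_deriv (by simp only [id_eq]; ring)
  have hmono : MonotoneOn (fun s => s * Real.cosh s - Real.sinh s) (Set.Ici (0:ℝ)) := by
    apply monotoneOn_of_deriv_nonneg (convex_Ici 0)
    · exact Continuous.continuousOn (by fun_prop)
    · intro s _; exact (hd s).differentiableAt.differentiableWithinAt
    · intro s hs
      rw [(hd s).deriv]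
      rw [interior_Ici] at hs
      exact mul_nonneg (le_of_lt hs) (my_sinh_nonneg (le_of_lt hs))
  have h0 := hmono Set.self_mem_Ici (Set.mem_Ici.2 ht) ht
  simp only [zero_mul, Real.sinh_zero, sub_zero, Real.cosh_zero, mul_one, sub_self] at h0
  linarith

lemma my_abs_tanh_le_abs (t : ℝ) : |Real.tanh t| ≤ |t| := by
  have key : ∀ s : ℝ, 0 ≤ s → |Real.tanh s| ≤ |s| := by
    intro s hs
    have htn : 0 ≤ Real.tanh s := by
      rw [Real.tanh_eq_sinh_div_cosh]
      exact div_nonneg (my_sinh_nonneg hs) (Real.cosh_pos s).le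
    rw [abs_of_nonneg htn, abs_of_nonneg hs]
    exact my_tanh_le_self hs
  rcases le_or_gt 0 t with h | h
  · exact key t h
  · have := key (-t) (by linarith)
    rwa [Real.tanh_neg, abs_neg, abs_neg] at this

lemma my_aux_iter (k : ℕ) (a b : ℝ) (α : ℕ → ℝ) (x : ℤ → ℝ)
    (hx : ∀ n : ℤ, 0 ≤ n → x (n + 1) =
      a * x n + α n.toNat * Real.tanh (x n - b * x (n - (k : ℤ))))
    (n : ℤ) (hn : 0 ≤ n) (m : ℕ) :
    x (n + m) = a ^ m * x n + ∑ i ∈ Finset.range m,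
      a ^ (m - 1 - i) * (α (n + i).toNat * Real.tanh (x (n + i) - b * x (n + i - (k : ℤ)))) := by
  induction m with
  | zero => simp
  | succ m ih =>
    have hnm : (0:ℤ) ≤ n + m := by
      have : (0:ℤ) ≤ (m:ℤ) := Int.natCast_nonneg m
      linarith
    have hstep := hx (n + m) hnm
    have hcast : n + ((m + 1 : ℕ) : ℤ) = (n + m) + 1 := by push_cast; ring
    rw [hcast, hstep]
    nth_rewrite 1 [ih]
    rw [Finset.sum_range_succ]
    have hre : ∀ i ∈ Finset.range m,
        a ^ (m + 1 - 1 - i) * (α (n + i).toNat * Real.tanh (x (n + i) - b * x (n + i - (k : ℤ))))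
        = a * (a ^ (m - 1 - i) * (α (n + i).toNat * Real.tanh (x (n + i) - b * x (n + i - (k : ℤ))))) := by
      intro i hi
      rw [Finset.mem_range] at hi
      have h2 : m + 1 - 1 - i = (m - 1 - i) + 1 := by omega
      rw [h2, pow_succ]; ring
    rw [Finset.sum_congr rfl hre, ← Finset.mul_sum]
    have h3 : m + 1 - 1 - m = 0 := by omega
    rw [h3, pow_zero, pow_succ]
    ring

/-- **Example (equation (dham)).** For real numbers `a, σ` with `0 < |a| < 1`,
`σ > 0`, `b = a^k`, and a real sequence `(αₙ)` with `|αₙ| ≤ σ`, if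
`σ < (1 − |a|)/(1 − |a|^k)` then every solution of
`x_{n+1} = a xₙ + αₙ tanh(xₙ − b x_{n−k})` converges to zero. -/
theorem global_attractivity_tanh_delay_equation
    (k : ℕ) (hk : 0 < k) (a σ : ℝ) (ha0 : 0 < |a|) (ha1 : |a| < 1) (hσ0 : 0 < σ)
    (b : ℝ) (hb : b = a ^ k)
    (α : ℕ → ℝ) (hα : ∀ n : ℕ, |α n| ≤ σ)
    (hσ : σ < (1 - |a|) / (1 - |a| ^ k))
    (x : ℤ → ℝ)
    (hx : ∀ n : ℤ, 0 ≤ n → x (n + 1) =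
      a * x n + α n.toNat * Real.tanh (x n - b * x (n - (k : ℤ)))) :
    Filter.Tendsto (fun n : ℕ => x (n : ℤ)) Filter.atTop (nhds 0) := by
  have hA0 : (0:ℝ) ≤ |a| := abs_nonneg a
  have h1A : (0:ℝ) < 1 - |a| := by linarith
  have hAne : (1:ℝ) - |a| ≠ 0 := ne_of_gt h1A
  have hAk : |a| ^ k < 1 := pow_lt_one₀ hA0 ha1 hk.ne'
  have h1Ak : (0:ℝ) < 1 - |a| ^ k := by linarith
  set S := ∑ i ∈ Finset.range k, |a| ^ i with hS
  have hSid : S * (1 - |a|) = 1 - |a| ^ k := by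
    have hne2 : |a| - 1 ≠ 0 := by intro h; apply hAne; linarith
    rw [hS, geom_sum_eq (by intro h; rw [h] at ha1; linarith : |a| ≠ 1),
      div_mul_eq_mul_div, div_eq_iff hne2]
    ring
  have hSpos : (0:ℝ) < S := by nlinarith
  set c := σ * S with hc
  have hc0 : (0:ℝ) ≤ c := le_of_lt (mul_pos hσ0 hSpos)
  have hc1 : c < 1 := by
    have h := (lt_div_iff₀ h1Ak).1 hσ
    nlinarith
  -- pointwise representation of x n - b x (n-k) for n ≥ k
  have hptr : ∀ n : ℤ, (k:ℤ) ≤ n → x n - b * x (n - (k:ℤ)) = ∑ i ∈ Finset.range k,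
      a ^ (k - 1 - i) * (α (n - (k:ℤ) + i).toNat *
        Real.tanh (x (n - (k:ℤ) + i) - b * x (n - (k:ℤ) + i - (k:ℤ)))) := by
    intro n hn
    have h := my_aux_iter k a b α x hx (n - (k:ℤ)) (by omega) k
    have he : n - (k:ℤ) + ((k:ℕ):ℤ) = n := by push_cast; ring
    rw [he] at h
    rw [hb] at h ⊢
    linarith [h]
  have hkey : ∀ n : ℤ, (k:ℤ) ≤ n → ∀ B : ℝ,
      (∀ i : ℕ, i < k →
        |Real.tanh (x (n - (k:ℤ) + i) - b * x (n - (k:ℤ) + i - (k:ℤ)))| ≤ B) →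
      |x n - b * x (n - (k:ℤ))| ≤ c * B := by
    intro n hn B hB
    rw [hptr n hn]
    have step1 := Finset.abs_sum_le_sum_abs
      (fun i => a ^ (k - 1 - i) * (α (n - (k:ℤ) + i).toNat *
        Real.tanh (x (n - (k:ℤ) + i) - b * x (n - (k:ℤ) + i - (k:ℤ))))) (Finset.range k)
    refine le_trans step1 ?_
    have step2 : ∀ i ∈ Finset.range k,
        |a ^ (k - 1 - i) * (α (n - (k:ℤ) + i).toNat *
          Real.tanh (x (n - (k:ℤ) + i) - b * x (n - (k:ℤ) + i - (k:ℤ))))|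
        ≤ |a| ^ (k - 1 - i) * (σ * B) := by
      intro i hi
      rw [Finset.mem_range] at hi
      rw [abs_mul, abs_mul, abs_pow]
      refine mul_le_mul_of_nonneg_left ?_ (pow_nonneg hA0 _)
      exact mul_le_mul (hα _) (hB i hi) (abs_nonneg _) hσ0.le
    refine le_trans (Finset.sum_le_sum step2) ?_
    rw [← Finset.sum_mul, Finset.sum_range_reflect (fun i => |a| ^ i) k, ← hS]
    rw [hc]; ring_nf; exact le_refl _
  have hwin : ∀ m : ℕ, ∀ n : ℤ, (k:ℤ) * ((m:ℤ) + 1) ≤ n →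
      |x n - b * x (n - (k:ℤ))| ≤ c ^ (m + 1) := by
    intro m
    induction m with
    | zero =>
      intro n hn
      have hn' : (k:ℤ) ≤ n := by simpa using hn
      have := hkey n hn' 1 (fun i _ => my_abs_tanh_le_one _)
      simpa using this
    | succ m ih =>
      intro n hn
      have hk1 : (1:ℤ) ≤ (k:ℤ) := by exact_mod_cast hk
      have hn' : (k:ℤ) ≤ n := by nlinarith [Int.natCast_nonneg m]
      have hmain := hkey n hn' (c ^ (m + 1)) ?_
      · refine le_trans hmain (le_of_eq ?_)
        rw [pow_succ]
        ring
      · intro i hi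
        have hj : (k:ℤ) * ((m:ℤ) + 1) ≤ n - (k:ℤ) + i := by
          have hi0 : (0:ℤ) ≤ (i:ℤ) := Int.natCast_nonneg i
          push_cast at hn ⊢
          nlinarith
        exact le_trans (my_abs_tanh_le_abs _) (ih _ hj)
  have hu : ∀ δ : ℝ, 0 < δ → ∃ N : ℕ, ∀ j : ℕ, N ≤ j →
      |α j * Real.tanh (x (j:ℤ) - b * x ((j:ℤ) - (k:ℤ)))| ≤ δ := by
    intro δ hδ
    obtain ⟨m, hm⟩ := exists_pow_lt_of_lt_one (div_pos hδ hσ0) hc1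
    refine ⟨k * (m + 1), fun j hj => ?_⟩
    have hj' : (k:ℤ) * ((m:ℤ) + 1) ≤ (j:ℤ) := by exact_mod_cast hj
    have h1 := hwin m (j:ℤ) hj'
    have h2 : |Real.tanh (x (j:ℤ) - b * x ((j:ℤ) - (k:ℤ)))| ≤ c ^ (m + 1) :=
      le_trans (my_abs_tanh_le_abs _) h1
    have h3 : c ^ (m + 1) ≤ c ^ m := pow_le_pow_of_le_one hc0 hc1.le (Nat.le_succ m)
    rw [abs_mul]
    have h4 : |α j| * |Real.tanh (x (j:ℤ) - b * x ((j:ℤ) - (k:ℤ)))| ≤ σ * (δ / σ) :=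
      mul_le_mul (hα j) (by linarith) (abs_nonneg _) hσ0.le
    refine le_trans h4 (le_of_eq ?_)
    field_simp
  have hgrow : ∀ (N : ℕ) (δ : ℝ), 0 ≤ δ →
      (∀ j : ℕ, N ≤ j → |α j * Real.tanh (x (j:ℤ) - b * x ((j:ℤ) - (k:ℤ)))| ≤ δ) →
      ∀ m : ℕ, |x ((N:ℤ) + m)| ≤ |a| ^ m * |x (N:ℤ)| + δ / (1 - |a|) := by
    intro N δ hδ hbd m
    induction m with
    | zero =>
      have h0 : 0 ≤ δ / (1 - |a|) := div_nonneg hδ h1A.le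
      simp only [Nat.cast_zero, add_zero, pow_zero, one_mul]
      linarith
    | succ m ih =>
      have hnm : (0:ℤ) ≤ (N:ℤ) + (m:ℤ) := by positivity
      have hstep := hx ((N:ℤ) + m) hnm
      have htn : ((N:ℤ) + (m:ℤ)).toNat = N + m := by omega
      have hcast : (N:ℤ) + ((m + 1 : ℕ):ℤ) = ((N:ℤ) + m) + 1 := by push_cast; ring
      rw [hcast, hstep, htn]
      have hb1 := hbd (N + m) (Nat.le_add_right N m)
      have hcast2 : ((N + m : ℕ) : ℤ) = (N:ℤ) + m := by push_cast; ring
      rw [hcast2] at hb1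
      have step1 : |a * x ((N:ℤ) + m) + α (N + m) *
          Real.tanh (x ((N:ℤ) + m) - b * x ((N:ℤ) + m - (k:ℤ)))|
          ≤ |a| * |x ((N:ℤ) + m)| + δ := by
        refine le_trans (abs_add_le _ _) ?_
        rw [abs_mul]
        exact add_le_add le_rfl hb1
      refine le_trans step1 ?_
      have step2 : |a| * |x ((N:ℤ) + m)| ≤ |a| * (|a| ^ m * |x (N:ℤ)| + δ / (1 - |a|)) :=
        mul_le_mul_of_nonneg_left ih hA0
      have step3 : |a| * (δ / (1 - |a|)) + δ = δ / (1 - |a|) := by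
        field_simp
        ring
      calc |a| * |x ((N:ℤ) + m)| + δ
          ≤ |a| * (|a| ^ m * |x (N:ℤ)| + δ / (1 - |a|)) + δ := by linarith
        _ = |a| ^ (m + 1) * |x (N:ℤ)| + (|a| * (δ / (1 - |a|)) + δ) := by ring
        _ = |a| ^ (m + 1) * |x (N:ℤ)| + δ / (1 - |a|) := by rw [step3]
  rw [Metric.tendsto_atTop]
  intro ε hε
  have hδ : 0 < ε * (1 - |a|) / 4 := by positivity
  obtain ⟨N, hN⟩ := hu _ hδ
  have hbound := hgrow N _ hδ.le hN
  have htnd : Filter.Tendsto (fun m : ℕ => |a| ^ m * |x (N:ℤ)|) Filter.atTop (nhds 0) := by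
    have h := tendsto_pow_atTop_nhds_zero_of_lt_one hA0 ha1
    simpa using h.mul_const |x (N:ℤ)|
  obtain ⟨M, hM⟩ := Metric.tendsto_atTop.1 htnd (ε/4) (by positivity)
  refine ⟨N + M, fun n hn => ?_⟩
  have hm : M ≤ n - N := by omega
  have hcastn : (n:ℤ) = (N:ℤ) + ((n - N : ℕ):ℤ) := by omega
  rw [Real.dist_eq, sub_zero, hcastn]
  have h1 := hbound (n - N)
  have h2 := hM (n - N) hm
  rw [Real.dist_eq, sub_zero] at h2
  have h3 : |a| ^ (n - N) * |x (N:ℤ)| < ε/4 := lt_of_le_of_lt (le_abs_self _) h2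
  have h4 : ε * (1 - |a|) / 4 / (1 - |a|) = ε/4 := by field_simp
  rw [h4] at h1
  linarith
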